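/- Suppose F is convex and β-smooth (β > 0) with minimizer w*. Let η > 0, set the step size γ = 1/(β + 1/η), and let w ∈ ℝ^d and B ≥ 1. Then the expected one-step mini-batch SGD progress satisfies E_s[F(w − γ g_s(w))] − F(w*) ≤ ((β + 1/η)/2)·(‖w − w*‖² − E_s[‖(w − γ g_s(w)) − w*‖²]) + (η/2)·E_s[‖∇F(w) − g_s(w)‖²]. -/

import Mathlib

open scoped BigOperators RealInnerProductSpace

section Aux
variable {E : Type*} [NormedAddCommGroup E] [InnerProductSpace ℝ E] [CompleteSpace E]

lemma line_hasDerivAt' {F : E → ℝ} (hF : Differentiable ℝ F) (x v : E) (t : ℝ) :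
    HasDerivAt (fun t : ℝ => F (x + t • v)) ⟪gradient F (x + t • v), v⟫ t := by
  have h1 : HasFDerivAt F (InnerProductSpace.toDual ℝ E (gradient F (x + t • v))) (x + t • v) :=
    (hF _).hasGradientAt
  have h2 : HasDerivAt (fun t : ℝ => x + t • v) v t := by
    simpa using ((hasDerivAt_id t).smul_const v).const_add x
  exact h1.comp_hasDerivAt t h2

/-- first-order condition for convexity -/
lemma convex_first_order' {F : E → ℝ} (hconv : ConvexOn ℝ Set.univ F)
    (hF : Differentiable ℝ F) (x y : E) :
    F x + ⟪gradient F x, y - x⟫ ≤ F y := by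
  have hd := line_hasDerivAt' hF x (y - x) 0
  simp only [zero_smul, add_zero] at hd
  have hslope : Filter.Tendsto (slope (fun t : ℝ => F (x + t • (y - x))) 0)
      (nhdsWithin 0 (Set.Ioi (0:ℝ))) (nhds ⟪gradient F x, y - x⟫) :=
    (hasDerivAt_iff_tendsto_slope.mp hd).mono_left
      (nhdsWithin_mono 0 (fun t ht => ne_of_gt ht))
  have hev : ∀ᶠ t in nhdsWithin 0 (Set.Ioi (0:ℝ)),
      slope (fun t : ℝ => F (x + t • (y - x))) 0 t ≤ F y - F x := by
    filter_upwards [Ioc_mem_nhdsGT one_pos] with t ht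
    have hcx : F (x + t • (y - x)) ≤ (1 - t) * F x + t * F y := by
      have := hconv.2 (Set.mem_univ x) (Set.mem_univ y)
        (by linarith [ht.2] : (0:ℝ) ≤ 1 - t) (le_of_lt ht.1) (by ring)
      simpa [smul_eq_mul, show (1 - t) • x + t • y = x + t • (y - x) by
        simp [smul_sub, sub_smul]; abel] using this
    rw [slope_def_field]
    simp only [zero_smul, add_zero, div_eq_iff, sub_zero]
    rw [div_le_iff₀ ht.1]
    nlinarith [ht.1]
  have := le_of_tendsto hslope hev
  linarith

/-- descent lemma for β-smooth functions -/
lemma descent_lemma' {F : E → ℝ} (hF : Differentiable ℝ F) {β : ℝ}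
    (hsmooth : ∀ x y, ‖gradient F x - gradient F y‖ ≤ β * ‖x - y‖) (x y : E) :
    F y ≤ F x + ⟪gradient F x, y - x⟫ + β / 2 * ‖y - x‖ ^ 2 := by
  set v := y - x with hv
  set g : ℝ → ℝ := fun t => F (x + t • v) - t * ⟪gradient F x, v⟫ - β * t ^ 2 / 2 * ‖v‖ ^ 2
    with hg
  have hderiv : ∀ t : ℝ, HasDerivAt g
      (⟪gradient F (x + t • v), v⟫ - ⟪gradient F x, v⟫ - β * t * ‖v‖ ^ 2) t := by
    intro t
    have h1 := line_hasDerivAt' hF x v t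
    have h2 : HasDerivAt (fun t : ℝ => t * ⟪gradient F x, v⟫) ⟪gradient F x, v⟫ t := by
      simpa using (hasDerivAt_id t).mul_const ⟪gradient F x, v⟫
    have h3 : HasDerivAt (fun t : ℝ => β * t ^ 2 / 2 * ‖v‖ ^ 2) (β * t * ‖v‖ ^ 2) t := by
      have : HasDerivAt (fun t : ℝ => t ^ 2) (2 * t) t := by
        simpa using hasDerivAt_pow 2 t
      have := ((this.const_mul β).div_const 2).mul_const (‖v‖ ^ 2)
      exact this.congr_deriv (by ring)
    exact (h1.sub h2).sub h3
  have hmono : g 1 ≤ g 0 := by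
    have : AntitoneOn g (Set.Icc 0 1) := by
      apply antitoneOn_of_deriv_nonpos (convex_Icc 0 1)
      · exact Continuous.continuousOn (continuous_iff_continuousAt.mpr
          (fun t => ((hderiv t).differentiableAt).continuousAt))
      · intro t ht
        exact ((hderiv t).differentiableAt).differentiableWithinAt
      · intro t ht
        rw [(hderiv t).deriv]
        rw [interior_Icc, Set.mem_Ioo] at ht
        have hC : ⟪gradient F (x + t • v) - gradient F x, v⟫ ≤ β * t * ‖v‖ ^ 2 := by
          calc ⟪gradient F (x + t • v) - gradient F x, v⟫
              ≤ ‖gradient F (x + t • v) - gradient F x‖ * ‖v‖ := real_inner_le_norm _ _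
            _ ≤ (β * ‖(x + t • v) - x‖) * ‖v‖ := by
                have := hsmooth (x + t • v) x
                nlinarith [norm_nonneg v, norm_nonneg (gradient F (x + t • v) - gradient F x)]
            _ = β * t * ‖v‖ ^ 2 := by
                simp [norm_smul, abs_of_pos ht.1]; ring
        rw [inner_sub_left] at hC
        linarith
    exact this (by simp) (by simp) zero_le_one
  simp only [hg, one_smul, zero_smul, add_zero, one_pow, zero_pow, mul_zero, zero_mul,
    mul_one, sub_zero] at hmono
  have hxy : x + v = y := by simp [hv]
  rw [hxy] at hmono
  norm_num at hmono
  have hfd : (fderiv ℝ F x) v = ⟪gradient F x, v⟫ := by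
    rw [gradient, InnerProductSpace.toDual_symm_apply]
  linarith

/-- one-step inequality for a fixed stochastic gradient estimate `g`. -/
lemma one_step_est {F : E → ℝ} (hconv : ConvexOn ℝ Set.univ F) (hFd : Differentiable ℝ F)
    {β : ℝ} (hβ : 0 < β) (hsmooth : ∀ x y, ‖gradient F x - gradient F y‖ ≤ β * ‖x - y‖)
    {η γ : ℝ} (hη : 0 < η) (hγ : γ = 1 / (β + 1 / η)) (w wstar g : E) :
    F (w - γ • g) - F wstar ≤ ⟪gradient F w - g, w - wstar⟫
      + ((β + 1 / η) / 2) * (‖w - wstar‖ ^ 2 - ‖(w - γ • g) - wstar‖ ^ 2)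
      + (η / 2) * ‖gradient F w - g‖ ^ 2 := by
  have hcpos : 0 < β + 1 / η := by positivity
  have hη' : η ≠ 0 := ne_of_gt hη
  have hc' : β + 1 / η ≠ 0 := ne_of_gt hcpos
  set G := gradient F w with hG
  set e := G - g with he
  set u := w - wstar with hu
  have hA : F w + ⟪G, wstar - w⟫ ≤ F wstar := convex_first_order' hconv hFd w wstar
  have hB : F (w - γ • g) ≤ F w + ⟪G, (w - γ • g) - w⟫ + β / 2 * ‖(w - γ • g) - w‖ ^ 2 :=
    descent_lemma' hFd hsmooth w (w - γ • g)
  have e1 : (w - γ • g) - w = -(γ • g) := by abel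
  have e2 : (w - γ • g) - wstar = u - γ • g := by rw [hu]; abel
  have e5 : wstar - w = -u := by rw [hu]; abel
  rw [e1] at hB
  rw [e5] at hA
  rw [inner_neg_right] at hA
  rw [inner_neg_right, real_inner_smul_right, norm_neg, norm_smul] at hB
  have hBB : F (w - γ • g) ≤ F w - γ * ⟪G, g⟫ + β / 2 * (γ ^ 2 * ‖g‖ ^ 2) := by
    have : (‖γ‖ * ‖g‖) ^ 2 = γ ^ 2 * ‖g‖ ^ 2 := by
      rw [mul_pow]; rw [Real.norm_eq_abs, sq_abs]
    rw [this] at hB; exact hB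
  have e3 : ‖u - γ • g‖ ^ 2 = ‖u‖ ^ 2 - 2 * (γ * ⟪u, g⟫) + γ ^ 2 * ‖g‖ ^ 2 := by
    rw [norm_sub_sq_real, real_inner_smul_right, norm_smul, mul_pow,
      Real.norm_eq_abs, sq_abs]
  have e4 : ⟪G, g⟫ = ⟪e, g⟫ + ‖g‖ ^ 2 := by
    rw [he, inner_sub_left, real_inner_self_eq_norm_sq]; ring
  have e6 : ⟪G, u⟫ = ⟪e, u⟫ + ⟪g, u⟫ := by
    rw [he, inner_sub_left]; ring
  have e7 : ‖γ • g + η • e‖ ^ 2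
      = γ ^ 2 * ‖g‖ ^ 2 + 2 * (γ * η * ⟪e, g⟫) + η ^ 2 * ‖e‖ ^ 2 := by
    rw [norm_add_sq_real, real_inner_smul_left, real_inner_smul_right, norm_smul, norm_smul,
      mul_pow, mul_pow, Real.norm_eq_abs, Real.norm_eq_abs, sq_abs, sq_abs,
      real_inner_comm g e]
    ring
  have e7n : (0:ℝ) ≤ ‖γ • g + η • e‖ ^ 2 := sq_nonneg _
  have hip : ⟪u, g⟫ = ⟪g, u⟫ := by rw [real_inner_comm]
  have hkey : ⟪e, u⟫ + ((β + 1 / η) / 2) * (‖u‖ ^ 2 - ‖u - γ • g‖ ^ 2) + (η / 2) * ‖e‖ ^ 2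
      - (⟪G, u⟫ - γ * ⟪G, g⟫ + β / 2 * (γ ^ 2 * ‖g‖ ^ 2))
      = (1 / (2 * η)) * ‖γ • g + η • e‖ ^ 2 := by
    rw [e3, e4, e6, e7, hip, hγ]
    field_simp
    ring
  rw [e2]
  have hpos : (0:ℝ) ≤ (1 / (2 * η)) * ‖γ • g + η • e‖ ^ 2 := by positivity
  linarith


lemma gradient_avg {n : ℕ} (f : Fin n → E → ℝ) (hf : ∀ i, Differentiable ℝ (f i)) (w : E) :
    gradient (fun w => (1 / (n : ℝ)) * ∑ i, f i w) w
      = (1 / (n : ℝ)) • ∑ i, gradient (f i) w := by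
  have h2 : HasFDerivAt (fun w => ∑ i, f i w)
      (∑ i, InnerProductSpace.toDual ℝ E (gradient (f i) w)) w :=
    HasFDerivAt.fun_sum (fun i _ => hasGradientAt_iff_hasFDerivAt.mp ((hf i) w).hasGradientAt)
  have h3 := h2.const_mul (1 / (n : ℝ))
  have h4 : HasGradientAt (fun w => (1 / (n : ℝ)) * ∑ i, f i w)
      ((1 / (n : ℝ)) • ∑ i, gradient (f i) w) w := by
    rw [hasGradientAt_iff_hasFDerivAt]
    refine h3.congr_fderiv ?_
    simp [map_sum, map_smul]
  exact h4.gradient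

lemma sum_comp_eval {n B : ℕ} (j : Fin B) (h : Fin n → E) :
    ∑ s : Fin B → Fin n, h (s j) = (n ^ (B - 1)) • ∑ i, h i := by
  have hcard : Fintype.card ({k : Fin B // k ≠ j} → Fin n) = n ^ (B - 1) := by
    rw [Fintype.card_fun]
    congr 1
    · simp
    · rw [Fintype.card_subtype_compl]
      simp
  calc ∑ s : Fin B → Fin n, h (s j)
      = ∑ p : Fin n × ({k : Fin B // k ≠ j} → Fin n), h p.1 :=
        Fintype.sum_equiv (Equiv.funSplitAt j (Fin n)) _ _ (fun s => rfl)
    _ = ∑ a : Fin n, ∑ _r : {k : Fin B // k ≠ j} → Fin n, h a := Fintype.sum_prod_type _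
    _ = ∑ a : Fin n, (n ^ (B - 1)) • h a := by
        simp [Finset.sum_const, Finset.card_univ, hcard]
    _ = (n ^ (B - 1)) • ∑ i, h i := (Finset.smul_sum).symm

end Aux

/-- For `F` convex and β-smooth with minimizer `w*`, with step size
`γ = 1/(β + 1/η)`, the expected one-step mini-batch SGD progress satisfies
`E_s[F(w − γ g_s(w))] − F(w*) ≤ ((β + 1/η)/2)·(‖w − w*‖² − E_s[‖(w − γ g_s(w)) − w*‖²])
  + (η/2)·E_s[‖∇F(w) − g_s(w)‖²]`. -/
theorem minibatch_convex_one_step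
    (d n B : ℕ) (hd : 1 ≤ d) (hn : 1 ≤ n) (hB : 1 ≤ B)
    (f : Fin n → EuclideanSpace ℝ (Fin d) → ℝ)
    (hf : ∀ i, Differentiable ℝ (f i))
    (F : EuclideanSpace ℝ (Fin d) → ℝ)
    (hF : F = fun w => (1 / (n : ℝ)) * ∑ i, f i w)
    (hconv : ConvexOn ℝ Set.univ F)
    (β : ℝ) (hβ : 0 < β)
    (hFdiff : Differentiable ℝ F)
    (hsmooth : ∀ x y, ‖gradient F x - gradient F y‖ ≤ β * ‖x - y‖)
    (wstar : EuclideanSpace ℝ (Fin d)) (hmin : ∀ v, F wstar ≤ F v)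
    (η : ℝ) (hη : 0 < η)
    (γ : ℝ) (hγ : γ = 1 / (β + 1 / η))
    (w : EuclideanSpace ℝ (Fin d)) :
    (1 / (n : ℝ) ^ B) *
        ∑ s : Fin B → Fin n,
          F (w - γ • ((1 / (B : ℝ)) • ∑ j, gradient (f (s j)) w))
      - F wstar
      ≤ ((β + 1 / η) / 2) *
          (‖w - wstar‖ ^ 2 -
            (1 / (n : ℝ) ^ B) *
              ∑ s : Fin B → Fin n,
                ‖(w - γ • ((1 / (B : ℝ)) • ∑ j, gradient (f (s j)) w)) - wstar‖ ^ 2)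
        + (η / 2) *
            ((1 / (n : ℝ) ^ B) *
              ∑ s : Fin B → Fin n,
                ‖gradient F w - (1 / (B : ℝ)) • ∑ j, gradient (f (s j)) w‖ ^ 2) := by
  classical
  set G : EuclideanSpace ℝ (Fin d) := gradient F w with hG
  set gs : (Fin B → Fin n) → EuclideanSpace ℝ (Fin d) :=
    fun s => (1 / (B : ℝ)) • ∑ j, gradient (f (s j)) w with hgs
  set c : ℝ := β + 1 / η with hc
  have hn0 : (n : ℝ) ≠ 0 := by positivity
  have hB0 : (B : ℝ) ≠ 0 := by
    have : 0 < B := hB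
    positivity
  have hN : (0:ℝ) < (n : ℝ) ^ B := by positivity
  have hNne : ((n : ℝ) ^ B) ≠ 0 := ne_of_gt hN
  -- gradient formula
  have hgradF : G = (1 / (n : ℝ)) • ∑ i, gradient (f i) w := by
    rw [hG, hF]; exact gradient_avg f hf w
  -- the sum of all minibatch gradients equals (n^B) • G
  have hzero : ∑ s : Fin B → Fin n, (G - gs s) = 0 := by
    rw [Finset.sum_sub_distrib]
    have h1 : ∑ _s : Fin B → Fin n, G = ((n : ℝ) ^ B) • G := by
      rw [Finset.sum_const, Finset.card_univ, Fintype.card_fun]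
      rw [← Nat.cast_smul_eq_nsmul ℝ]
      push_cast
      simp
    have h2 : ∑ s : Fin B → Fin n, gs s = ((n : ℝ) ^ B) • G := by
      simp only [hgs]
      rw [← Finset.smul_sum]
      have hswap : ∑ s : Fin B → Fin n, ∑ j, gradient (f (s j)) w
          = ∑ j : Fin B, ∑ s : Fin B → Fin n, gradient (f (s j)) w := Finset.sum_comm
      rw [hswap]
      have hj : ∀ j : Fin B, ∑ s : Fin B → Fin n, gradient (f (s j)) w
          = (n ^ (B - 1)) • ∑ i, gradient (f i) w := fun j => sum_comp_eval j (fun i => gradient (f i) w)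
      rw [Finset.sum_congr rfl (fun j _ => hj j), Finset.sum_const, Finset.card_univ,
        Fintype.card_fin]
      rw [hgradF, smul_smul, ← Nat.cast_smul_eq_nsmul ℝ, smul_smul, smul_smul]
      congr 1
      push_cast
      have hBpow : (n : ℝ) ^ B = (n : ℝ) ^ (B - 1) * n := by
        conv_lhs => rw [show B = (B - 1) + 1 from (Nat.succ_pred_eq_of_pos hB).symm]
        rw [pow_succ]
      rw [hBpow]
      field_simp
    rw [h1, h2, sub_self]
  have hzero' : ∑ s : Fin B → Fin n, ⟪G - gs s, w - wstar⟫ = 0 := by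
    rw [← sum_inner, hzero, inner_zero_left]
  -- per-sample inequality
  have hps : ∀ s : Fin B → Fin n,
      F (w - γ • gs s) - F wstar - ⟪G - gs s, w - wstar⟫
        ≤ (c / 2) * (‖w - wstar‖ ^ 2 - ‖(w - γ • gs s) - wstar‖ ^ 2)
          + (η / 2) * ‖G - gs s‖ ^ 2 := by
    intro s
    have := one_step_est hconv hFdiff hβ hsmooth hη hγ w wstar (gs s)
    rw [← hG, ← hc] at this
    linarith
  have hsum1 := Finset.sum_le_sum (fun s (_ : s ∈ Finset.univ) => hps s)
  -- rewrite the left side of the summed inequality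
  have hL : ∑ s : Fin B → Fin n,
      (F (w - γ • gs s) - F wstar - ⟪G - gs s, w - wstar⟫)
      = (∑ s : Fin B → Fin n, F (w - γ • gs s)) - ((n : ℝ) ^ B) * F wstar := by
    rw [Finset.sum_sub_distrib, Finset.sum_sub_distrib, hzero', sub_zero,
      Finset.sum_const, Finset.card_univ, Fintype.card_fun, Fintype.card_fin, Fintype.card_fin,
      nsmul_eq_mul]
    push_cast
    ring
  -- rewrite the right side
  have hR : ∑ s : Fin B → Fin n,
      ((c / 2) * (‖w - wstar‖ ^ 2 - ‖(w - γ • gs s) - wstar‖ ^ 2)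
        + (η / 2) * ‖G - gs s‖ ^ 2)
      = (c / 2) * (((n : ℝ) ^ B) * ‖w - wstar‖ ^ 2
          - ∑ s : Fin B → Fin n, ‖(w - γ • gs s) - wstar‖ ^ 2)
        + (η / 2) * ∑ s : Fin B → Fin n, ‖G - gs s‖ ^ 2 := by
    rw [Finset.sum_add_distrib, ← Finset.mul_sum, ← Finset.mul_sum, Finset.sum_sub_distrib,
      Finset.sum_const, Finset.card_univ, Fintype.card_fun, Fintype.card_fin, Fintype.card_fin,
      nsmul_eq_mul]
    push_cast
    ring
  rw [hL, hR] at hsum1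
  -- divide by n^B
  have hdiv := mul_le_mul_of_nonneg_left hsum1 (le_of_lt (one_div_pos.mpr hN))
  have hLeq : (1 / (n : ℝ) ^ B) *
      ((∑ s : Fin B → Fin n, F (w - γ • gs s)) - ((n : ℝ) ^ B) * F wstar)
      = (1 / (n : ℝ) ^ B) * (∑ s : Fin B → Fin n, F (w - γ • gs s)) - F wstar := by
    field_simp
  have hReq : (1 / (n : ℝ) ^ B) *
      ((c / 2) * (((n : ℝ) ^ B) * ‖w - wstar‖ ^ 2
          - ∑ s : Fin B → Fin n, ‖(w - γ • gs s) - wstar‖ ^ 2)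
        + (η / 2) * ∑ s : Fin B → Fin n, ‖G - gs s‖ ^ 2)
      = (c / 2) * (‖w - wstar‖ ^ 2
          - (1 / (n : ℝ) ^ B) * ∑ s : Fin B → Fin n, ‖(w - γ • gs s) - wstar‖ ^ 2)
        + (η / 2) * ((1 / (n : ℝ) ^ B) * ∑ s : Fin B → Fin n, ‖G - gs s‖ ^ 2) := by
    field_simp
  rw [hLeq, hReq] at hdiv
  exact hdiv
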